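/- Let (Ω, μ) be a probability space, X : Ω → ℝᵖ a random vector with E‖X‖² < ∞, mean vector μ_X = E[X], and invertible covariance matrix Σ (entries Σ_{ij} = E[X_iX_j] − E[X_i]E[X_j]). Let B be a real p×d matrix with BᵀΣB invertible and set P := ΣB(BᵀΣB)⁻¹Bᵀ. Let W : Ω → {0, 1} be measurable with 0 < μ(W = 1) < 1. Assume (i) the linearity condition E[X | σ(BᵀX)] = μ_X + P·(X − μ_X) almost everywhere, and (ii) the conditional-independence identity E[1_{W=1}·X | σ(BᵀX)] = μ[1_{W=1} | σ(BᵀX)]·E[X | σ(BᵀX)] almost everywhere. Then the vector Σ⁻¹·(E[X | W = 1] − E[X | W = 0]) lies in the column space of B, where E[X | W = j] denotes the expectation of X under the conditional probability measure μ(· | {W = j}). -/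

import Mathlib

open MeasureTheory Matrix ProbabilityTheory

/-- Static form of the claim that the sliced inverse regression direction lies in the central
subspace: under the linearity condition and the conditional-independence identity for the
Bernoulli variable `W`, the vector `Σ⁻¹·(E[X | W = 1] − E[X | W = 0])` belongs to the column
space of `B`. -/
theorem stmt_13 {Ω : Type*} {mΩ : MeasurableSpace Ω} (μ : Measure Ω) [IsProbabilityMeasure μ]
    {p d : ℕ} (X : Ω → Fin p → ℝ) (hXmeas : Measurable X)
    (hX2 : ∀ i, MemLp (fun ω => X ω i) 2 μ)
    (μX : Fin p → ℝ) (hμX : μX = fun i => ∫ ω, X ω i ∂μ)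
    (Cov : Matrix (Fin p) (Fin p) ℝ)
    (hCov : Cov = fun i j =>
      (∫ ω, X ω i * X ω j ∂μ) - (∫ ω, X ω i ∂μ) * (∫ ω, X ω j ∂μ))
    (hCovInv : IsUnit Cov)
    (B : Matrix (Fin p) (Fin d) ℝ) (hBinv : IsUnit (Bᵀ * Cov * B))
    (P : Matrix (Fin p) (Fin p) ℝ) (hP : P = Cov * B * (Bᵀ * Cov * B)⁻¹ * Bᵀ)
    (Z : Ω → Fin d → ℝ) (hZ : Z = fun ω k => ∑ j, B j k * X ω j)
    (W : Ω → ℝ) (hWmeas : Measurable W) (hW01 : ∀ ω, W ω = 0 ∨ W ω = 1)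
    (hW1pos : 0 < μ {ω | W ω = 1}) (hW1lt : μ {ω | W ω = 1} < 1)
    (hlin : ∀ i, μ[fun ω => X ω i | MeasurableSpace.comap Z inferInstance]
      =ᵐ[μ] fun ω => μX i + ∑ j, P i j * (X ω j - μX j))
    (hcondind : ∀ i, μ[fun ω => W ω * X ω i | MeasurableSpace.comap Z inferInstance]
      =ᵐ[μ] fun ω =>
        (μ[W | MeasurableSpace.comap Z inferInstance]) ω *
          (μ[fun ω' => X ω' i | MeasurableSpace.comap Z inferInstance]) ω) :
    ∃ c : Fin d → ℝ,
      Cov⁻¹ *ᵥ (fun i =>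
          (∫ ω, X ω i ∂(μ[|{ω | W ω = 1}])) - ∫ ω, X ω i ∂(μ[|{ω | W ω = 0}]))
        = B *ᵥ c := by
  classical
  have hZmeas : Measurable[mΩ] Z := by
    rw [hZ]
    exact measurable_pi_lambda _ fun k => Finset.measurable_sum _ fun j _ =>
      measurable_const.mul ((measurable_pi_apply j).comp hXmeas)
  have hm : MeasurableSpace.comap Z inferInstance ≤ mΩ :=
    fun t ⟨u, hu, hut⟩ => hut ▸ hZmeas hu
  -- basic integrability
  have hXi_int : ∀ i, Integrable (fun ω => X ω i) μ :=
    fun i => (hX2 i).integrable (by norm_num)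
  have hW01' : ∀ ω, 0 ≤ W ω ∧ W ω ≤ 1 := by
    intro ω; rcases hW01 ω with h | h <;> rw [h] <;> norm_num
  have hWabs : ∀ ω, |W ω| ≤ 1 := fun ω =>
    abs_le.2 ⟨le_trans (by norm_num) (hW01' ω).1, (hW01' ω).2⟩
  have hW_int : Integrable W μ := by
    refine Integrable.mono (integrable_const (1 : ℝ)) hWmeas.aestronglyMeasurable ?_
    filter_upwards with ω
    simpa using hWabs ω
  have hWX_int : ∀ i, Integrable (fun ω => W ω * X ω i) μ := by
    intro i
    refine Integrable.mono (hXi_int i)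
      (hWmeas.mul ((measurable_pi_apply i).comp hXmeas)).aestronglyMeasurable ?_
    filter_upwards with ω
    have : |W ω * X ω i| = |W ω| * |X ω i| := abs_mul _ _
    rw [Real.norm_eq_abs, Real.norm_eq_abs, this]
    exact mul_le_of_le_one_left (abs_nonneg _) (hWabs ω)
  set g : Ω → ℝ := μ[W | MeasurableSpace.comap Z inferInstance] with hg_def
  have hg_sm : StronglyMeasurable[MeasurableSpace.comap Z inferInstance] g := stronglyMeasurable_condExp
  have hg_int : Integrable g μ := integrable_condExp
  have hg_bd : ∀ᵐ ω ∂μ, |g ω| ≤ 1 := by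
    have h0 : 0 ≤ᵐ[μ] g :=
      condExp_nonneg (Filter.Eventually.of_forall fun ω => (hW01' ω).1)
    have h1 : g ≤ᵐ[μ] μ[(fun _ => (1 : ℝ)) | MeasurableSpace.comap Z inferInstance] :=
      condExp_mono hW_int (integrable_const 1)
        (Filter.Eventually.of_forall fun ω => (hW01' ω).2)
    have hc : μ[(fun _ => (1 : ℝ)) | MeasurableSpace.comap Z inferInstance] = fun _ => (1 : ℝ) := condExp_const hm 1
    filter_upwards [h0, h1] with ω h0ω h1ω
    rw [hc] at h1ω
    exact abs_le.2 ⟨le_trans (by norm_num) h0ω, h1ω⟩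
  have hgX_int : ∀ j, Integrable (fun ω => g ω * X ω j) μ := by
    intro j
    refine Integrable.mono (hXi_int j)
      (((hg_sm.mono hm).measurable.mul
        ((measurable_pi_apply j).comp hXmeas)).aestronglyMeasurable) ?_
    filter_upwards [hg_bd] with ω hω
    rw [Real.norm_eq_abs, Real.norm_eq_abs, abs_mul]
    exact mul_le_of_le_one_left (abs_nonneg _) hω
  -- ∫ g·X_j = ∫ W·X_j
  have hgX_eq : ∀ j, ∫ ω, g ω * X ω j ∂μ = ∫ ω, W ω * X ω j ∂μ := by
    intro j
    have hpull : μ[(fun ω => g ω * X ω j) | MeasurableSpace.comap Z inferInstance]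
        =ᵐ[μ] fun ω => g ω * (μ[fun ω' => X ω' j | MeasurableSpace.comap Z inferInstance]) ω := by
      have := condExp_mul_of_stronglyMeasurable_left (m := MeasurableSpace.comap Z inferInstance) (μ := μ) hg_sm
        (f := g) (g := fun ω => X ω j) (hgX_int j) (hXi_int j)
      exact this
    calc ∫ ω, g ω * X ω j ∂μ
        = ∫ ω, (μ[(fun ω' => g ω' * X ω' j) | MeasurableSpace.comap Z inferInstance]) ω ∂μ :=
          (integral_condExp hm).symm
      _ = ∫ ω, g ω * (μ[fun ω' => X ω' j | MeasurableSpace.comap Z inferInstance]) ω ∂μ := integral_congr_ae hpull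
      _ = ∫ ω, (μ[(fun ω' => W ω' * X ω' j) | MeasurableSpace.comap Z inferInstance]) ω ∂μ :=
          (integral_congr_ae (hcondind j)).symm
      _ = ∫ ω, W ω * X ω j ∂μ := integral_condExp hm
  have hg_eq : ∫ ω, g ω ∂μ = ∫ ω, W ω ∂μ := integral_condExp hm
  -- the key identity
  have key : ∀ i, ∫ ω, W ω * X ω i ∂μ - (∫ ω, W ω ∂μ) * μX i
      = ∑ j, P i j * (∫ ω, W ω * X ω j ∂μ - (∫ ω, W ω ∂μ) * μX j) := by
    intro i
    have h1 : ∫ ω, W ω * X ω i ∂μ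
        = ∫ ω, g ω * (μ[fun ω' => X ω' i | MeasurableSpace.comap Z inferInstance]) ω ∂μ := by
      rw [← integral_condExp (f := fun ω => W ω * X ω i) hm]
      exact integral_congr_ae (hcondind i)
    have h2 : ∫ ω, g ω * (μ[fun ω' => X ω' i | MeasurableSpace.comap Z inferInstance]) ω ∂μ
        = ∫ ω, g ω * (μX i + ∑ j, P i j * (X ω j - μX j)) ∂μ := by
      refine integral_congr_ae ?_
      filter_upwards [hlin i] with ω hω
      rw [hω]
    have hexp : (fun ω => g ω * (μX i + ∑ j, P i j * (X ω j - μX j)))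
        = fun ω => μX i * g ω + ∑ j, P i j * (g ω * X ω j - μX j * g ω) := by
      funext ω
      rw [mul_add, Finset.mul_sum, mul_comm (g ω) (μX i)]
      congr 1
      exact Finset.sum_congr rfl fun j _ => by ring
    have hsum_int : ∀ j ∈ Finset.univ, Integrable
        (fun ω => P i j * (g ω * X ω j - μX j * g ω)) μ :=
      fun j _ => (((hgX_int j).sub (hg_int.const_mul (μX j))).const_mul (P i j))
    have h3 : ∫ ω, g ω * (μX i + ∑ j, P i j * (X ω j - μX j)) ∂μ
        = μX i * ∫ ω, g ω ∂μ
          + ∑ j, P i j * ((∫ ω, g ω * X ω j ∂μ) - μX j * ∫ ω, g ω ∂μ) := by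
      rw [hexp, integral_add (hg_int.const_mul (μX i))
        (integrable_finset_sum _ hsum_int), integral_const_mul,
        integral_finset_sum _ hsum_int]
      congr 1
      refine Finset.sum_congr rfl fun j _ => ?_
      rw [integral_const_mul, integral_sub (hgX_int j) (hg_int.const_mul (μX j)),
        integral_const_mul]
    rw [h1, h2, h3, hg_eq]
    simp only [hgX_eq]
    have hre : ∑ j, P i j * ((∫ ω, W ω * X ω j ∂μ) - μX j * ∫ ω, W ω ∂μ)
        = ∑ j, P i j * ((∫ ω, W ω * X ω j ∂μ) - (∫ ω, W ω ∂μ) * μX j) :=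
      Finset.sum_congr rfl fun j _ => by ring
    rw [hre]
    ring
  -- the slice set
  set s : Set Ω := {ω | W ω = 1} with hs_def
  have hs_meas : MeasurableSet[mΩ] s := hWmeas (measurableSet_singleton 1)
  set a : ℝ := (μ s).toReal with ha_def
  have hμs_ne_top : μ s ≠ ⊤ := (measure_lt_top μ s).ne
  have ha_pos : 0 < a := ENNReal.toReal_pos hW1pos.ne' hμs_ne_top
  have ha_lt : a < 1 := by
    have := (ENNReal.toReal_lt_toReal hμs_ne_top ENNReal.one_ne_top).2 hW1lt
    simpa using this
  have haW : ∫ ω, W ω ∂μ = a := by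
    have hWind : W = s.indicator (fun _ => (1 : ℝ)) := by
      funext ω
      rcases hW01 ω with h | h
      · rw [h, Set.indicator_of_notMem]
        simp [hs_def, h]
      · rw [h, Set.indicator_of_mem]
        exact h
    rw [hWind, integral_indicator hs_meas]
    simp [ha_def, measureReal_def]
  have hWX_eq : ∀ i, ∫ ω, W ω * X ω i ∂μ = ∫ ω in s, X ω i ∂μ := by
    intro i
    have : (fun ω => W ω * X ω i) = s.indicator (fun ω => X ω i) := by
      funext ω
      rcases hW01 ω with h | h
      · rw [h, Set.indicator_of_notMem]
        · ring
        · simp [hs_def, h]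
      · rw [h, Set.indicator_of_mem]
        · ring
        · exact h
    rw [this, integral_indicator hs_meas]
  -- complement set
  have hs0 : {ω | W ω = 0} = sᶜ := by
    ext ω
    rcases hW01 ω with h | h <;> simp [hs_def, h]
  have hμsc : (μ sᶜ).toReal = 1 - a := by
    rw [prob_compl_eq_one_sub hs_meas, ENNReal.toReal_sub_of_le prob_le_one (by norm_num)]
    simp [ha_def]
  have hcompl : ∀ i, ∫ ω in sᶜ, X ω i ∂μ
      = (∫ ω, X ω i ∂μ) - ∫ ω in s, X ω i ∂μ := by
    intro i
    have := integral_add_compl hs_meas (hXi_int i)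
    linarith
  -- conditional integrals
  have hcond1 : ∀ i, ∫ ω, X ω i ∂(μ[|s]) = a⁻¹ * ∫ ω in s, X ω i ∂μ := by
    intro i
    have : μ[|s] = (μ s)⁻¹ • μ.restrict s := rfl
    rw [this, integral_smul_measure, ENNReal.toReal_inv, smul_eq_mul]
  have hcond0 : ∀ i, ∫ ω, X ω i ∂(μ[|{ω | W ω = 0}])
      = (1 - a)⁻¹ * ((∫ ω, X ω i ∂μ) - ∫ ω in s, X ω i ∂μ) := by
    intro i
    have hc : μ[|sᶜ] = (μ sᶜ)⁻¹ • μ.restrict sᶜ := rfl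
    rw [hs0, hc, integral_smul_measure, ENNReal.toReal_inv, hμsc, hcompl i, smul_eq_mul]
  -- the vector v and its fixed-point property
  set v : Fin p → ℝ := fun i => (∫ ω, W ω * X ω i ∂μ) - a * μX i with hv_def
  have hv_fix : v = P *ᵥ v := by
    funext i
    have := key i
    rw [haW] at this
    simpa [hv_def, Matrix.mulVec, dotProduct] using this
  -- the difference vector equals (a(1-a))⁻¹ • v
  have hD : (fun i => (∫ ω, X ω i ∂(μ[|{ω | W ω = 1}])) - ∫ ω, X ω i ∂(μ[|{ω | W ω = 0}]))
      = (a * (1 - a))⁻¹ • v := by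
    funext i
    have h1 := hcond1 i
    have h0 := hcond0 i
    have hWXi := hWX_eq i
    have hT : ∫ ω, X ω i ∂μ = μX i := by rw [hμX]
    show (∫ ω, X ω i ∂(μ[|s])) - ∫ ω, X ω i ∂(μ[|{ω | W ω = 0}])
      = (a * (1 - a))⁻¹ * v i
    rw [h1, h0]
    simp only [hv_def]
    rw [hWXi, hT]
    have hane : a ≠ 0 := ne_of_gt ha_pos
    have hane1 : 1 - a ≠ 0 := by linarith
    field_simp
    ring
  rw [hD]
  -- matrix algebra
  have hdet : IsUnit Cov.det := (Matrix.isUnit_iff_isUnit_det Cov).mp hCovInv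
  refine ⟨(a * (1 - a))⁻¹ • (((Bᵀ * Cov * B)⁻¹ * Bᵀ) *ᵥ v), ?_⟩
  rw [Matrix.mulVec_smul, Matrix.mulVec_smul, hv_fix, Matrix.mulVec_mulVec,
    Matrix.mulVec_mulVec, hP]
  congr 1
  rw [show Cov⁻¹ * (Cov * B * (Bᵀ * Cov * B)⁻¹ * Bᵀ) = Cov⁻¹ * Cov * (B * ((Bᵀ * Cov * B)⁻¹ * Bᵀ)) by
    simp only [Matrix.mul_assoc], Matrix.nonsing_inv_mul Cov hdet, Matrix.one_mul]
  rw [← hP, ← hv_fix]
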